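/- For every function f : [n] → [n], every subset S ⊆ [n], and every positive integer d, there exists a set A of at most d permutations of [n] such that for each r ∈ S, either some π ∈ A satisfies π(r) = f(r), or |S ∩ f⁻¹(f(r))| > d. -/

import Mathlib

open Finset

lemma exists_perm_extend {α : Type*} [Fintype α] [DecidableEq α] (T : Finset α)
    (g : α → α) (hg : Set.InjOn g T) :
    ∃ π : Equiv.Perm α, ∀ x ∈ T, π x = g x := by
  have hcard : (T.image g).card = T.card := Finset.card_image_of_injOn hg
  have h1 : Function.Bijective (fun x : {a // a ∈ T} =>
      (⟨g x, Finset.mem_image_of_mem g x.2⟩ : {a // a ∈ T.image g})) := by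
    rw [Fintype.bijective_iff_injective_and_card]
    constructor
    · intro a b hab
      exact Subtype.ext (hg a.2 b.2 (congrArg Subtype.val hab))
    · rw [Fintype.card_coe, Fintype.card_coe, hcard]
  let e1 := Equiv.ofBijective _ h1
  have h2 : Fintype.card {a // ¬ a ∈ T} = Fintype.card {a // ¬ a ∈ T.image g} := by
    simp only [Fintype.card_subtype_compl, Fintype.card_coe]
    rw [hcard]
  let e2 : {a // ¬ a ∈ T} ≃ {a // ¬ a ∈ T.image g} := Fintype.equivOfCardEq h2
  refine ⟨(Equiv.sumCompl (· ∈ T)).symm.trans ((e1.sumCongr e2).trans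
    (Equiv.sumCompl (· ∈ T.image g))), fun x hx => ?_⟩
  simp [Equiv.sumCompl_symm_apply_of_pos (p := (· ∈ T)) hx, e1]

/-- For every `f : [n] → [n]`, `S ⊆ [n]` and positive `d`, there is a set of at
most `d` permutations of `[n]` that `(S,d)`-covers `f`. -/
theorem perm_s_cover (n d : ℕ) (hd : 0 < d) (f : Fin n → Fin n) (S : Finset (Fin n)) :
    ∃ A : Finset (Equiv.Perm (Fin n)), A.card ≤ d ∧
      ∀ r ∈ S, (∃ π ∈ A, π r = f r) ∨
        d < (S.filter fun s => f s = f r).card := by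
  classical
  set idx : Fin n → ℕ := fun r => (S.filter fun s => f s = f r ∧ s < r).card with hidx
  set T : ℕ → Finset (Fin n) := fun i => S.filter fun r => idx r = i with hT
  have key : ∀ r ∈ S, ∀ r' ∈ S, idx r = idx r' → f r = f r' → ¬ r < r' := by
    intro r hrS r' hr'S hi hf hlt
    have hsub : (S.filter fun s => f s = f r ∧ s < r) ⊂ S.filter fun s => f s = f r' ∧ s < r' := by
      refine Finset.ssubset_iff_of_subset ?_ |>.2 ⟨r, ?_, ?_⟩
      · intro s hs
        simp only [Finset.mem_filter] at hs ⊢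
        exact ⟨hs.1, hf ▸ hs.2.1, hs.2.2.trans hlt⟩
      · exact Finset.mem_filter.2 ⟨hrS, hf, hlt⟩
      · simp
    have := Finset.card_lt_card hsub
    simp only [hidx] at hi
    omega
  have hinj : ∀ i, Set.InjOn f (T i) := by
    intro i r hr r' hr' hf
    simp only [hT, Finset.coe_filter, Set.mem_setOf_eq] at hr hr'
    rcases lt_trichotomy r r' with h | h | h
    · exact absurd h (key r hr.1 r' hr'.1 (hr.2.trans hr'.2.symm) hf)
    · exact h
    · exact absurd h (key r' hr'.1 r hr.1 (hr'.2.trans hr.2.symm) hf.symm)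
  choose π hπ using fun i => exists_perm_extend (T i) f (hinj i)
  refine ⟨(Finset.range d).image π, le_trans Finset.card_image_le (by simp), ?_⟩
  intro r hr
  by_cases hbig : d < (S.filter fun s => f s = f r).card
  · exact Or.inr hbig
  refine Or.inl ⟨π (idx r), Finset.mem_image.2 ⟨idx r, Finset.mem_range.2 ?_, rfl⟩, ?_⟩
  · have hss : (S.filter fun s => f s = f r ∧ s < r) ⊂ S.filter fun s => f s = f r := by
      refine Finset.ssubset_iff_of_subset ?_ |>.2 ⟨r, Finset.mem_filter.2 ⟨hr, rfl⟩, by simp⟩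
      intro s hs
      simp only [Finset.mem_filter] at hs ⊢
      exact ⟨hs.1, hs.2.1⟩
    have := Finset.card_lt_card hss
    simp only [hidx]
    omega
  · exact hπ (idx r) r (Finset.mem_filter.2 ⟨hr, rfl⟩)
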